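/- For every n ≥ 1, the sphere S^n ⊂ ℝ^{n+1} satisfies TC^β_2(S^n) ≤ 3: the product S^n × S^n can be covered by the three open sets U_+ = (S^n∖{N}) × (S^n∖{N}), U_− = (S^n∖{S}) × (S^n∖{S}), and V = (D_+ × D_−) ∪ (D_− × D_+), where N and S are the north and south poles and D_± = {x ∈ S^n : ±x_{n+1} > 0}; each of these sets is invariant under the swap involution and admits a continuous swap-equivariant section of the evaluation map e_2 : C(I,S^n) → S^n × S^n. -/

import Mathlib

open unitInterval

noncomputable section

/-- The point `j/(n-1)` of the unit interval, for `j : Fin n`.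
These are the `n` evaluation points `0, 1/(n-1), …, (n-2)/(n-1), 1`. -/
def evalPt (n : ℕ) (j : Fin n) : unitInterval :=
  ⟨(j : ℝ) / ((n : ℝ) - 1), by
    have hn : 1 ≤ n := j.pos
    rcases eq_or_lt_of_le hn with h | h
    · have hn1 : n = 1 := h.symm
      subst hn1
      simp [Fin.fin_one_eq_zero j]
    · have h1 : (0 : ℝ) < (n : ℝ) - 1 := by
        have : (1 : ℝ) < (n : ℝ) := by exact_mod_cast h
        linarith
      constructor
      · exact div_nonneg (Nat.cast_nonneg _) h1.le
      · rw [div_le_one h1]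
        have hj : (j : ℕ) + 1 ≤ n := j.is_lt
        have : ((j : ℕ) : ℝ) + 1 ≤ (n : ℝ) := by exact_mod_cast hj
        linarith⟩

/-- Coordinate reversal (the involution `β`) on `n`-tuples:
`β·(x_1,…,x_n) = (x_n,…,x_1)`. -/
def rtuple {X : Type*} {n : ℕ} (x : Fin n → X) : Fin n → X := fun j => x j.rev

/-- Path reversal (the involution `β`) on the free path space `C(I,X)`:
`(β·γ)(t) = γ(1-t)`. -/
def rpath {X : Type*} [TopologicalSpace X] (γ : C(unitInterval, X)) : C(unitInterval, X) :=
  γ.comp ⟨unitInterval.symm, unitInterval.continuous_symm⟩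

/-- `X^n` can be covered by `k` open sets, on each of which there is a continuous
section of the evaluation map `e_n : C(I,X) → X^n`,
`γ ↦ (γ(0), γ(1/(n-1)), …, γ(1))`. -/
def HasPlanners (X : Type*) [TopologicalSpace X] (n k : ℕ) : Prop :=
  ∃ U : Fin k → Set (Fin n → X),
    (∀ i, IsOpen (U i)) ∧ (⋃ i, U i) = Set.univ ∧
    (∀ i, ∃ s : C(U i, C(unitInterval, X)),
      ∀ x : U i, ∀ j : Fin n, s x (evalPt n j) = (x : Fin n → X) j)

/-- The `n`-th (ordinary, higher) topological complexity `TC_n(X)`, as a value in `ℕ∞`. -/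
def TCn (X : Type*) [TopologicalSpace X] (n : ℕ) : ℕ∞ :=
  sInf {k : ℕ∞ | ∃ m : ℕ, (m : ℕ∞) = k ∧ HasPlanners X n m}

/-- `X^n` can be covered by `k` β-invariant open sets, on each of which there is a
continuous β-equivariant section of the evaluation map `e_n : C(I,X) → X^n`
(a bidirectional motion planner). -/
def HasBidirPlanners (X : Type*) [TopologicalSpace X] (n k : ℕ) : Prop :=
  ∃ U : Fin k → Set (Fin n → X),
    (∀ i, IsOpen (U i)) ∧ (⋃ i, U i) = Set.univ ∧
    (∀ i, ∀ x ∈ U i, rtuple x ∈ U i) ∧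
    (∀ i, ∃ s : C(U i, C(unitInterval, X)),
      (∀ x : U i, ∀ j : Fin n, s x (evalPt n j) = (x : Fin n → X) j) ∧
      (∀ x : U i, ∀ hx : rtuple (x : Fin n → X) ∈ U i,
        s ⟨rtuple (x : Fin n → X), hx⟩ = rpath (s x)))

/-- The `n`-th bidirectional topological complexity `TC^β_n(X)`, as a value in `ℕ∞`. -/
def TCbeta (X : Type*) [TopologicalSpace X] (n : ℕ) : ℕ∞ :=
  sInf {k : ℕ∞ | ∃ m : ℕ, (m : ℕ∞) = k ∧ HasBidirPlanners X n m}

/-- The action of a permutation `sg ∈ Σ_n` on `n`-tuples (by permuting coordinates). -/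
def permTuple {X : Type*} {n : ℕ} (sg : Equiv.Perm (Fin n)) (x : Fin n → X) : Fin n → X :=
  fun j => x (sg j)

/-- `X^n` can be covered by `k` `Σ_n`-invariant open sets, on each of which there is a
continuous `Σ_n`-equivariant section of `E_n : X^{J_n} → X^n`,
`(α_1,…,α_n) ↦ (α_1(1),…,α_n(1))`, where `X^{J_n}` is the space of `n`-tuples of paths
with a common initial point. -/
def HasSymPlanners (X : Type*) [TopologicalSpace X] (n k : ℕ) : Prop :=
  ∃ U : Fin k → Set (Fin n → X),
    (∀ i, IsOpen (U i)) ∧ (⋃ i, U i) = Set.univ ∧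
    (∀ i, ∀ sg : Equiv.Perm (Fin n), ∀ x ∈ U i, permTuple sg x ∈ U i) ∧
    (∀ i, ∃ s : C(U i, Fin n → C(unitInterval, X)),
      (∀ x : U i, ∀ j j' : Fin n, s x j 0 = s x j' 0) ∧
      (∀ x : U i, ∀ j : Fin n, s x j 1 = (x : Fin n → X) j) ∧
      (∀ x : U i, ∀ sg : Equiv.Perm (Fin n),
        ∀ hx : permTuple sg (x : Fin n → X) ∈ U i,
        s ⟨permTuple sg (x : Fin n → X), hx⟩ = permTuple sg (s x)))

/-- The `n`-th symmetrized topological complexity `TC^Σ_n(X)`, as a value in `ℕ∞`. -/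
def TCsym (X : Type*) [TopologicalSpace X] (n : ℕ) : ℕ∞ :=
  sInf {k : ℕ∞ | ∃ m : ℕ, (m : ℕ∞) = k ∧ HasSymPlanners X n m}

/-- The unit sphere `S^m ⊂ ℝ^{m+1}`. -/
abbrev Sph (m : ℕ) : Type :=
  Metric.sphere (0 : EuclideanSpace ℝ (Fin (m + 1))) 1

end
noncomputable section

/-- The setoid on `C(I,X)` identifying each path with its reverse. -/
def pathRevSetoid (X : Type*) [TopologicalSpace X] : Setoid C(unitInterval, X) where
  r γ δ := γ = δ ∨ γ = rpath δ
  iseqv := by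
    constructor
    · intro γ; exact Or.inl rfl
    · intro γ δ h
      rcases h with h | h
      · exact Or.inl h.symm
      · refine Or.inr ?_
        subst h
        ext t
        simp [rpath]
    · intro γ δ η h1 h2
      rcases h1 with h1 | h1 <;> rcases h2 with h2 | h2
      · exact Or.inl (h1.trans h2)
      · exact Or.inr (h1.trans h2)
      · subst h1 h2; exact Or.inr rfl
      · subst h1 h2
        refine Or.inl ?_
        ext t
        simp [rpath]

/-- The quotient `C(I,X)/β` of the free path space by path reversal. -/
def PathQuot (X : Type*) [TopologicalSpace X] : Type _ := Quotient (pathRevSetoid X)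

instance (X : Type*) [TopologicalSpace X] : TopologicalSpace (PathQuot X) :=
  instTopologicalSpaceQuotient

/-- The setoid on `Y × Y` identifying a pair with its swap. -/
def swapSetoid (Y : Type*) : Setoid (Y × Y) where
  r p q := p = q ∨ p = Prod.swap q
  iseqv := by
    constructor
    · intro p; exact Or.inl rfl
    · intro p q h
      rcases h with h | h
      · exact Or.inl h.symm
      · exact Or.inr (by rw [h, Prod.swap_swap])
    · intro p q u h1 h2
      rcases h1 with h1 | h1 <;> rcases h2 with h2 | h2
      · exact Or.inl (h1.trans h2)
      · exact Or.inr (h1.trans h2)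
      · subst h1 h2; exact Or.inr rfl
      · subst h1 h2; exact Or.inl (Prod.swap_swap _)

/-- The second symmetric product `SP²(Y)`, the quotient of `Y × Y` by the swap involution. -/
def SP2 (Y : Type*) [TopologicalSpace Y] : Type _ := Quotient (swapSetoid Y)

instance (Y : Type*) [TopologicalSpace Y] : TopologicalSpace (SP2 Y) :=
  instTopologicalSpaceQuotient

/-- The map `φ : (X^l)² → X^{2l}`,
`φ(x_1,…,x_{2l}) = (x_l,…,x_1,x_{l+1},…,x_{2l})`. -/
def phiMap {X : Type*} (l : ℕ) (p : (Fin l → X) × (Fin l → X)) : Fin (2 * l) → X :=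
  fun j =>
    if h : (j : ℕ) < l then p.1 ⟨l - 1 - (j : ℕ), by omega⟩
    else p.2 ⟨(j : ℕ) - l, by have := j.isLt; omega⟩

/-- The north pole `N = (0,…,0,1)` of `S^n`. -/
def northPole (n : ℕ) : Sph n :=
  ⟨EuclideanSpace.single (Fin.last n) (1 : ℝ), by
    simp [mem_sphere_zero_iff_norm, EuclideanSpace.norm_single]⟩

/-- The south pole `S = (0,…,0,-1)` of `S^n`. -/
def southPole (n : ℕ) : Sph n :=
  ⟨EuclideanSpace.single (Fin.last n) (-1 : ℝ), by
    simp [mem_sphere_zero_iff_norm, EuclideanSpace.norm_single]⟩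

/-- The open upper hemisphere `D_+ = {x ∈ S^n : x_{n+1} > 0}`. -/
def upperHemi (n : ℕ) : Set (Sph n) :=
  {x | 0 < (x : EuclideanSpace ℝ (Fin (n + 1))) (Fin.last n)}

/-- The open lower hemisphere `D_- = {x ∈ S^n : x_{n+1} < 0}`. -/
def lowerHemi (n : ℕ) : Set (Sph n) :=
  {x | (x : EuclideanSpace ℝ (Fin (n + 1))) (Fin.last n) < 0}

end

noncomputable section

/-- `U_+ = (S^n∖{N}) × (S^n∖{N})`. -/
def Uplus (n : ℕ) : Set (Sph n × Sph n) :=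
  {p | p.1 ≠ northPole n ∧ p.2 ≠ northPole n}

/-- `U_- = (S^n∖{S}) × (S^n∖{S})`. -/
def Uminus (n : ℕ) : Set (Sph n × Sph n) :=
  {p | p.1 ≠ southPole n ∧ p.2 ≠ southPole n}

/-- `V = (D_+ × D_-) ∪ (D_- × D_+)`. -/
def Vset (n : ℕ) : Set (Sph n × Sph n) :=
  (upperHemi n ×ˢ lowerHemi n) ∪ (lowerHemi n ×ˢ upperHemi n)

/-- `W ⊆ S^n × S^n` is swap-invariant and admits a continuous swap-equivariant
section of the evaluation map `e_2 : C(I,S^n) → S^n × S^n`, `γ ↦ (γ(0),γ(1))`. -/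
def HasSwapEquivariantSection (n : ℕ) (W : Set (Sph n × Sph n)) : Prop :=
  (∀ p ∈ W, Prod.swap p ∈ W) ∧
  ∃ s : C(W, C(unitInterval, Sph n)),
    (∀ p : W, s p 0 = (p : Sph n × Sph n).1 ∧ s p 1 = (p : Sph n × Sph n).2) ∧
    (∀ p : W, ∀ hp : Prod.swap (p : Sph n × Sph n) ∈ W,
      s ⟨Prod.swap (p : Sph n × Sph n), hp⟩ = rpath (s p))

end


noncomputable section AuxTCB
open Real unitInterval

namespace AuxTCB

variable {n : ℕ}

abbrev EE (n : ℕ) := EuclideanSpace ℝ (Fin (n+1))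

def Nv (n : ℕ) : EE n := EuclideanSpace.single (Fin.last n) (1:ℝ)
def e0 (n : ℕ) : EE n := EuclideanSpace.single (0 : Fin (n+1)) (1:ℝ)

lemma comb_ne_zero {v w : EE n} (hv : ‖v‖ = 1) (hw : ‖w‖ = 1)
    (hvw : v ≠ -w) {a b : ℝ} (ha : 0 ≤ a) (hb : 0 ≤ b) (hab : a + b = 1) :
    a • v + b • w ≠ 0 := by
  intro h
  have h1 : a • v = -(b • w) := by rw [eq_neg_iff_add_eq_zero]; exact h
  have h2 : a = b := by
    have := congrArg norm h1
    simpa [norm_smul, abs_of_nonneg ha, abs_of_nonneg hb, hv, hw] using this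
  have hb2 : b = 1/2 := by linarith
  have ha2 : a = 1/2 := by linarith
  apply hvw
  rw [ha2, hb2, ← smul_neg] at h1
  exact smul_right_injective (EE n) (by norm_num : (1/2:ℝ) ≠ 0) h1

lemma Nv_norm (n : ℕ) : ‖Nv n‖ = 1 := by simp [Nv, EuclideanSpace.norm_single]
lemma Nv_last (n : ℕ) : Nv n (Fin.last n) = 1 := by simp [Nv, EuclideanSpace.single_apply]
lemma Nv_zero (hn : 1 ≤ n) : Nv n (0 : Fin (n+1)) = 0 := by
  simp [Nv, EuclideanSpace.single_apply]
  omega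
lemma e0_last (hn : 1 ≤ n) : e0 n (Fin.last n) = 0 := by
  simp [e0, EuclideanSpace.single_apply]
  omega
lemma e0_zero (n : ℕ) : e0 n (0 : Fin (n+1)) = 1 := by simp [e0, EuclideanSpace.single_apply]

/-! ### The generic section builder -/

lemma build_section (W : Set (Sph n × Sph n))
    (F : Sph n × Sph n → ℝ → EE n)
    (hF : Continuous fun q : ↥W × ℝ => F (q.1 : Sph n × Sph n) q.2)
    (hne : ∀ p ∈ W, ∀ t : ℝ, 0 ≤ t → t ≤ 1 → F p t ≠ 0)
    (h0 : ∀ p ∈ W, F p 0 = (p.1 : EE n))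
    (h1 : ∀ p ∈ W, F p 1 = (p.2 : EE n))
    (heq : ∀ p ∈ W, ∀ t : ℝ, 0 ≤ t → t ≤ 1 → F (Prod.swap p) t = F p (1 - t))
    (hsw : ∀ p ∈ W, Prod.swap p ∈ W) :
    HasSwapEquivariantSection n W := by
  refine ⟨hsw, ?_⟩
  set G : ↥W × unitInterval → EE n := fun q => F (q.1 : Sph n × Sph n) (q.2 : ℝ) with hG
  have hGc : Continuous G :=
    hF.comp (continuous_fst.prodMk (continuous_subtype_val.comp continuous_snd))
  have hGne : ∀ q : ↥W × unitInterval, G q ≠ 0 := fun q =>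
    hne q.1 q.1.2 q.2 q.2.2.1 q.2.2.2
  have hnorm : Continuous fun q : ↥W × unitInterval => ‖G q‖⁻¹ • G q :=
    (hGc.norm.inv₀ (fun q => norm_ne_zero_iff.2 (hGne q))).smul hGc
  have hmem : ∀ q : ↥W × unitInterval, ‖G q‖⁻¹ • G q ∈ Metric.sphere (0 : EE n) 1 := by
    intro q
    rw [mem_sphere_zero_iff_norm, norm_smul, norm_inv, norm_norm,
      inv_mul_cancel₀ (norm_ne_zero_iff.2 (hGne q))]
  set Φ : C(↥W × unitInterval, Sph n) :=
    ⟨fun q => ⟨‖G q‖⁻¹ • G q, hmem q⟩, hnorm.subtype_mk _⟩ with hΦ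
  refine ⟨Φ.curry, ?_, ?_⟩
  · intro p
    constructor
    · apply Subtype.ext
      show ‖G (p, 0)‖⁻¹ • G (p, 0) = ((p : Sph n × Sph n).1 : EE n)
      have : G (p, 0) = ((p : Sph n × Sph n).1 : EE n) := h0 p p.2
      rw [this]
      simp [norm_eq_of_mem_sphere]
    · apply Subtype.ext
      show ‖G (p, 1)‖⁻¹ • G (p, 1) = ((p : Sph n × Sph n).2 : EE n)
      have : G (p, 1) = ((p : Sph n × Sph n).2 : EE n) := h1 p p.2
      rw [this]
      simp [norm_eq_of_mem_sphere]
  · intro p hp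
    apply ContinuousMap.ext; intro t
    apply Subtype.ext
    show ‖G (⟨_, hp⟩, t)‖⁻¹ • G (⟨_, hp⟩, t) = (‖G (p, σ t)‖⁻¹ • G (p, σ t) : EE n)
    have : G (⟨Prod.swap (p : Sph n × Sph n), hp⟩, t) = G (p, σ t) := by
      show F (Prod.swap (p : Sph n × Sph n)) t = F (p : Sph n × Sph n) (σ t : ℝ)
      rw [heq p p.2 t t.2.1 t.2.2]
      norm_num [unitInterval.coe_symm_eq]
    rw [this]

/-! ### The sections through a pole, for `U₊` and `U₋` -/

def al (t : ℝ) : ℝ := min (2*t) 1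
def ga (t : ℝ) : ℝ := max (2*t-1) 0

lemma al_cont : Continuous al := (continuous_const.mul continuous_id).min continuous_const
lemma ga_cont : Continuous ga :=
  ((continuous_const.mul continuous_id).sub continuous_const).max continuous_const
lemma al_symm (t : ℝ) : al (1 - t) = 1 - ga t := by
  simp only [al, ga]
  rcases le_total t (1/2) with h | h
  · rw [max_eq_right (by linarith), min_eq_right (by linarith)]; ring
  · rw [max_eq_left (by linarith), min_eq_left (by linarith)]; ring
lemma ga_symm (t : ℝ) : ga (1 - t) = 1 - al t := by
  simp only [al, ga]
  rcases le_total t (1/2) with h | h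
  · rw [max_eq_left (by linarith), min_eq_left (by linarith)]; ring
  · rw [max_eq_right (by linarith), min_eq_right (by linarith)]; ring

def Fpole (pv : EE n) (x y : EE n) (t : ℝ) : EE n :=
  (1 - al t) • x + ga t • y + (al t - ga t) • pv

lemma Fpole_cont (pv : EE n) :
    Continuous fun q : (EE n × EE n) × ℝ => Fpole pv q.1.1 q.1.2 q.2 := by
  unfold Fpole
  apply Continuous.add
  apply Continuous.add
  · exact (continuous_const.sub (al_cont.comp continuous_snd)).smul continuous_fst.fst
  · exact (ga_cont.comp continuous_snd).smul continuous_fst.snd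
  · exact ((al_cont.comp continuous_snd).sub (ga_cont.comp continuous_snd)).smul
      continuous_const

lemma Fpole_ne_zero {pv x y : EE n} (hp : ‖pv‖ = 1) (hx : ‖x‖ = 1)
    (hy : ‖y‖ = 1) (hxp : x ≠ -pv) (hyp : y ≠ -pv) {t : ℝ} (h0 : 0 ≤ t) (h1 : t ≤ 1) :
    Fpole pv x y t ≠ 0 := by
  unfold Fpole
  rcases le_total t (1/2) with h | h
  · have hga : ga t = 0 := max_eq_right (by linarith)
    have hal : al t = 2*t := min_eq_left (by linarith)
    rw [hga, hal]
    have : (1 - 2*t) • x + (0:ℝ) • y + (2*t - 0) • pv = (1 - 2*t) • x + (2*t) • pv := by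
      module
    exact ne_of_eq_of_ne this (comb_ne_zero hx hp hxp (by linarith) (by linarith) (by ring))
  · have hga : ga t = 2*t - 1 := max_eq_left (by linarith)
    have hal : al t = 1 := min_eq_right (by linarith)
    rw [hga, hal]
    have : (1 - (1:ℝ)) • x + (2*t-1) • y + (1 - (2*t-1)) • pv
        = (2*t-1) • y + (2-2*t) • pv := by
      module
    exact ne_of_eq_of_ne this (comb_ne_zero hy hp hyp (by linarith) (by linarith) (by ring))

lemma Fpole_zero (pv x y : EE n) : Fpole pv x y 0 = x := by
  have h1 : al 0 = 0 := by norm_num [al]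
  have h2 : ga 0 = 0 := by norm_num [ga]
  unfold Fpole; rw [h1, h2]; module

lemma Fpole_one (pv x y : EE n) : Fpole pv x y 1 = y := by
  have h1 : al 1 = 1 := by norm_num [al]
  have h2 : ga 1 = 1 := by norm_num [ga]
  unfold Fpole; rw [h1, h2]; module

lemma Fpole_symm (pv x y : EE n) (t : ℝ) :
    Fpole pv y x t = Fpole pv x y (1 - t) := by
  unfold Fpole
  rw [al_symm, ga_symm]
  module

/-! ### The section for `V` -/

def aa (t : ℝ) : ℝ := min (3*t) 1
def bb (t : ℝ) : ℝ := max (min (3*t-1) 1) 0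
def cc (t : ℝ) : ℝ := max (3*t-2) 0

lemma aa_cont : Continuous aa := (continuous_const.mul continuous_id).min continuous_const
lemma bb_cont : Continuous bb :=
  (((continuous_const.mul continuous_id).sub continuous_const).min continuous_const).max
    continuous_const
lemma cc_cont : Continuous cc :=
  ((continuous_const.mul continuous_id).sub continuous_const).max continuous_const

def Gv (n : ℕ) (x y : EE n) (t : ℝ) : EE n :=
  (1 - aa t) • x + cc t • y + (aa t + cc t + Real.cos (π * bb t) - 1) • Nv n
    + Real.sin (π * bb t) • e0 n

lemma Gv_cont (n : ℕ) : Continuous fun q : (EE n × EE n) × ℝ => Gv n q.1.1 q.1.2 q.2 := by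
  unfold Gv
  have h1 : Continuous fun q : (EE n × EE n) × ℝ => aa q.2 := aa_cont.comp continuous_snd
  have h2 : Continuous fun q : (EE n × EE n) × ℝ => bb q.2 := bb_cont.comp continuous_snd
  have h3 : Continuous fun q : (EE n × EE n) × ℝ => cc q.2 := cc_cont.comp continuous_snd
  exact ((((continuous_const.sub h1).smul continuous_fst.fst).add
      (h3.smul continuous_fst.snd)).add
      ((((h1.add h3).add (Real.continuous_cos.comp (continuous_const.mul h2))).sub
        continuous_const).smul continuous_const)).add
      ((Real.continuous_sin.comp (continuous_const.mul h2)).smul continuous_const)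

lemma Gv_zero (n : ℕ) (x y : EE n) : Gv n x y 0 = x := by
  have h1 : aa 0 = 0 := by norm_num [aa]
  have h2 : bb 0 = 0 := by norm_num [bb]
  have h3 : cc 0 = 0 := by norm_num [cc]
  unfold Gv; rw [h1, h2, h3]
  norm_num

lemma Gv_one (n : ℕ) (x y : EE n) : Gv n x y 1 = y := by
  have h1 : aa 1 = 1 := by norm_num [aa]
  have h2 : bb 1 = 1 := by norm_num [bb]
  have h3 : cc 1 = 1 := by norm_num [cc]
  unfold Gv; rw [h1, h2, h3]
  norm_num [Real.cos_pi, Real.sin_pi]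

lemma Gv_ne_zero (hn : 1 ≤ n) {x y : EE n} (hx : ‖x‖ = 1) (hy : ‖y‖ = 1)
    (hxl : 0 < x (Fin.last n)) (hyl : y (Fin.last n) < 0) {t : ℝ}
    (h0 : 0 ≤ t) (h1 : t ≤ 1) : Gv n x y t ≠ 0 := by
  have hxN : x ≠ -Nv n := by
    intro h
    rw [h] at hxl
    simp [Nv_last] at hxl
    linarith
  have hyN : y ≠ Nv n := by
    intro h
    rw [h, Nv_last] at hyl
    linarith
  rcases le_total t (1/3) with ht | ht
  · have haa : aa t = 3*t := min_eq_left (by linarith)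
    have hbb : bb t = 0 := max_eq_right (le_trans (min_le_left _ _) (by linarith))
    have hcc : cc t = 0 := max_eq_right (by linarith)
    have key : Gv n x y t = (1 - 3*t) • x + (3*t) • Nv n := by
      unfold Gv; rw [haa, hbb, hcc]
      norm_num
    exact ne_of_eq_of_ne key
      (comb_ne_zero hx (Nv_norm n) hxN (by linarith) (by linarith) (by ring))
  rcases le_total t (2/3) with ht2 | ht2
  · have haa : aa t = 1 := min_eq_right (by linarith)
    have hbb : bb t = 3*t - 1 := by
      rw [bb, min_eq_left (by linarith), max_eq_left (by linarith)]
    have hcc : cc t = 0 := max_eq_right (by linarith)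
    have key : Gv n x y t
        = Real.cos (π * (3*t-1)) • Nv n + Real.sin (π * (3*t-1)) • e0 n := by
      unfold Gv; rw [haa, hbb, hcc]
      module
    intro h
    rw [key] at h
    have hl := congrArg (fun v : EE n => v (Fin.last n)) h
    have h0' := congrArg (fun v : EE n => v (0 : Fin (n+1))) h
    simp [PiLp.add_apply, PiLp.smul_apply, Nv_last, e0_last hn, Nv_zero hn, e0_zero]
      at hl h0'
    have := Real.sin_sq_add_cos_sq (π * (3*t-1))
    rw [hl, h0'] at this
    norm_num at this
  · have haa : aa t = 1 := min_eq_right (by linarith)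
    have hbb : bb t = 1 := by
      rw [bb, min_eq_right (by linarith), max_eq_left (by norm_num)]
    have hcc : cc t = 3*t - 2 := max_eq_left (by linarith)
    have key : Gv n x y t = (3*t-2) • y + (3 - 3*t) • (-Nv n) := by
      unfold Gv; rw [haa, hbb, hcc]
      rw [mul_one, Real.cos_pi, Real.sin_pi]
      module
    have hNn : ‖-Nv n‖ = 1 := by rw [norm_neg]; exact Nv_norm n
    have hyNn : y ≠ -(-Nv n) := by rw [neg_neg]; exact hyN
    exact ne_of_eq_of_ne key
      (comb_ne_zero hy hNn hyNn (by linarith) (by linarith) (by ring))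

end AuxTCB
end AuxTCB


noncomputable section MainAux
open Real unitInterval AuxTCB

variable {n : ℕ}

lemma coe_northPole (n : ℕ) : ((northPole n : Sph n) : EE n) = Nv n := rfl

lemma sph_norm (x : Sph n) : ‖(x : EE n)‖ = 1 := by
  have := x.2
  rwa [mem_sphere_zero_iff_norm] at this

lemma coordLast_cont (n : ℕ) :
    Continuous fun x : Sph n => (x : EE n) (Fin.last n) :=
  (EuclideanSpace.proj (𝕜 := ℝ) (Fin.last n)).continuous.comp continuous_subtype_val

lemma northPole_ne_southPole (n : ℕ) : northPole n ≠ southPole n := by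
  intro h
  have := congrArg (fun z : Sph n => (z : EE n) (Fin.last n)) h
  simp only [northPole, southPole] at this
  norm_num [EuclideanSpace.single_apply] at this

lemma mem_upperHemi_iff {x : Sph n} :
    x ∈ upperHemi n ↔ 0 < (x : EE n) (Fin.last n) := Iff.rfl

lemma mem_lowerHemi_iff {x : Sph n} :
    x ∈ lowerHemi n ↔ (x : EE n) (Fin.last n) < 0 := Iff.rfl

lemma isOpen_Uplus (n : ℕ) : IsOpen (Uplus n) := by
  have h : IsOpen ({northPole n}ᶜ : Set (Sph n)) := isOpen_compl_singleton
  exact (h.preimage continuous_fst).inter (h.preimage continuous_snd)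

lemma isOpen_Uminus (n : ℕ) : IsOpen (Uminus n) := by
  have h : IsOpen ({southPole n}ᶜ : Set (Sph n)) := isOpen_compl_singleton
  exact (h.preimage continuous_fst).inter (h.preimage continuous_snd)

lemma isOpen_upperHemi (n : ℕ) : IsOpen (upperHemi n) :=
  isOpen_lt continuous_const (coordLast_cont n)

lemma isOpen_lowerHemi (n : ℕ) : IsOpen (lowerHemi n) :=
  isOpen_lt (coordLast_cont n) continuous_const

lemma isOpen_Vset (n : ℕ) : IsOpen (Vset n) :=
  ((isOpen_upperHemi n).prod (isOpen_lowerHemi n)).union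
    ((isOpen_lowerHemi n).prod (isOpen_upperHemi n))

lemma northPole_mem_upper (n : ℕ) : (northPole n : Sph n) ∈ upperHemi n := by
  rw [mem_upperHemi_iff, coe_northPole, Nv_last]
  norm_num

lemma southPole_mem_lower (n : ℕ) : (southPole n : Sph n) ∈ lowerHemi n := by
  rw [mem_lowerHemi_iff]
  rw [show ((southPole n : Sph n) : EE n) = EuclideanSpace.single (Fin.last n) (-1:ℝ) from rfl]
  simp [EuclideanSpace.single_apply]

lemma cover_eq (n : ℕ) : Uplus n ∪ Uminus n ∪ Vset n = Set.univ := by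
  ext p
  simp only [Set.mem_univ, iff_true]
  by_cases h1 : p ∈ Uplus n
  · exact Or.inl (Or.inl h1)
  by_cases h2 : p ∈ Uminus n
  · exact Or.inl (Or.inr h2)
  right
  have h1' : p.1 = northPole n ∨ p.2 = northPole n := by
    by_contra h
    push_neg at h
    exact h1 ⟨h.1, h.2⟩
  have h2' : p.1 = southPole n ∨ p.2 = southPole n := by
    by_contra h
    push_neg at h
    exact h2 ⟨h.1, h.2⟩
  rcases h1' with hN | hN <;> rcases h2' with hS | hS
  · exact absurd (hN.symm.trans hS) (northPole_ne_southPole n)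
  · exact Or.inl ⟨by rw [hN]; exact northPole_mem_upper n, by rw [hS]; exact southPole_mem_lower n⟩
  · exact Or.inr ⟨by rw [hS]; exact southPole_mem_lower n, by rw [hN]; exact northPole_mem_upper n⟩
  · exact absurd (hN.symm.trans hS) (northPole_ne_southPole n)

/-! ### The three equivariant sections -/

lemma coords_cont (W : Set (Sph n × Sph n)) :
    Continuous fun q : ↥W × ℝ =>
      ((((q.1 : Sph n × Sph n).1 : EE n), ((q.1 : Sph n × Sph n).2 : EE n)), q.2) := by
  have c1 : Continuous fun q : ↥W × ℝ => ((q.1 : Sph n × Sph n).1 : EE n) :=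
    continuous_subtype_val.comp (continuous_fst.comp (continuous_subtype_val.comp continuous_fst))
  have c2 : Continuous fun q : ↥W × ℝ => ((q.1 : Sph n × Sph n).2 : EE n) :=
    continuous_subtype_val.comp (continuous_snd.comp (continuous_subtype_val.comp continuous_fst))
  exact (c1.prodMk c2).prodMk continuous_snd

lemma hasSES_pole (W : Set (Sph n × Sph n)) (pv : EE n) (hpv : ‖pv‖ = 1)
    (hmem : ∀ p ∈ W, (p.1 : EE n) ≠ -pv ∧ (p.2 : EE n) ≠ -pv)
    (hsw : ∀ p ∈ W, Prod.swap p ∈ W) :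
    HasSwapEquivariantSection n W := by
  apply build_section W (fun p t => Fpole pv (p.1 : EE n) (p.2 : EE n) t)
  · have h := (Fpole_cont pv).comp (coords_cont W)
    exact h
  · intro p hp t h0 h1
    exact Fpole_ne_zero hpv (sph_norm p.1) (sph_norm p.2) (hmem p hp).1 (hmem p hp).2 h0 h1
  · intro p _; exact Fpole_zero pv _ _
  · intro p _; exact Fpole_one pv _ _
  · intro p _ t _ _; exact Fpole_symm pv _ _ t
  · exact hsw

lemma ne_neg_of_ne_pole {x : Sph n} {P : Sph n} (h : x ≠ P) :
    (x : EE n) ≠ -(-(P : EE n)) := by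
  rw [neg_neg]
  exact fun hc => h (Subtype.ext hc)

lemma hasSES_Uplus (n : ℕ) : HasSwapEquivariantSection n (Uplus n) := by
  apply hasSES_pole (Uplus n) (-(Nv n)) (by rw [norm_neg]; exact Nv_norm n)
  · intro p hp
    exact ⟨ne_neg_of_ne_pole hp.1, ne_neg_of_ne_pole hp.2⟩
  · intro p hp
    exact ⟨hp.2, hp.1⟩

lemma coe_southPole (n : ℕ) : ((southPole n : Sph n) : EE n) = -(Nv n) := by
  rw [show ((southPole n : Sph n) : EE n) = EuclideanSpace.single (Fin.last n) (-1:ℝ) from rfl]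
  ext j
  simp [Nv, EuclideanSpace.single_apply]
  split_ifs <;> simp

lemma hasSES_Uminus (n : ℕ) : HasSwapEquivariantSection n (Uminus n) := by
  apply hasSES_pole (Uminus n) (Nv n) (Nv_norm n)
  · intro p hp
    constructor
    · intro hc
      exact hp.1 (Subtype.ext (hc.trans (coe_southPole n).symm))
    · intro hc
      exact hp.2 (Subtype.ext (hc.trans (coe_southPole n).symm))
  · intro p hp
    exact ⟨hp.2, hp.1⟩

set_option maxHeartbeats 2000000 in
lemma hasSES_Vset (n : ℕ) (hn : 1 ≤ n) : HasSwapEquivariantSection n (Vset n) := by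
  have hswV : ∀ p ∈ Vset n, Prod.swap p ∈ Vset n := by
    intro p hp
    rcases hp with h | h
    · exact Or.inr ⟨h.2, h.1⟩
    · exact Or.inl ⟨h.2, h.1⟩
  apply build_section (Vset n)
    (fun p t => if 0 < ((p.1 : Sph n) : EE n) (Fin.last n)
      then Gv n (p.1 : EE n) (p.2 : EE n) t
      else Gv n (p.2 : EE n) (p.1 : EE n) (1 - t))
  · -- continuity on the subtype
    have hc : Continuous fun q : ↥(Vset n) × ℝ =>
        (((q.1 : Sph n × Sph n).1 : EE n)) (Fin.last n) :=
      (EuclideanSpace.proj (𝕜 := ℝ) (Fin.last n)).continuous.comp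
        (continuous_subtype_val.comp
          (continuous_fst.comp (continuous_subtype_val.comp continuous_fst)))
    apply Continuous.if
    · intro a ha
      have hfr := frontier_lt_subset_eq continuous_const hc ha
      have h0 : (0:ℝ) = (((a.1 : Sph n × Sph n).1 : EE n)) (Fin.last n) := hfr
      exfalso
      rcases a.1.2 with h | h
      · exact absurd h.1 (by rw [mem_upperHemi_iff, ← h0]; exact lt_irrefl 0)
      · have := h.1
        rw [mem_lowerHemi_iff, ← h0] at this
        exact lt_irrefl 0 this
    · have h := (Gv_cont n).comp (coords_cont (Vset n))
      exact h
    · have c1 : Continuous fun q : ↥(Vset n) × ℝ => ((q.1 : Sph n × Sph n).1 : EE n) :=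
        continuous_subtype_val.comp
          (continuous_fst.comp (continuous_subtype_val.comp continuous_fst))
      have c2 : Continuous fun q : ↥(Vset n) × ℝ => ((q.1 : Sph n × Sph n).2 : EE n) :=
        continuous_subtype_val.comp
          (continuous_snd.comp (continuous_subtype_val.comp continuous_fst))
      have h := (Gv_cont n).comp
        ((c2.prodMk c1).prodMk ((continuous_const (y := (1:ℝ))).sub continuous_snd))
      exact h
  · intro p hp t h0 h1
    rcases hp with h | h
    · rw [if_pos (mem_upperHemi_iff.mp h.1)]
      exact Gv_ne_zero hn (sph_norm p.1) (sph_norm p.2) h.1 h.2 h0 h1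
    · rw [if_neg (not_lt.2 (le_of_lt (mem_lowerHemi_iff.mp h.1)))]
      exact Gv_ne_zero hn (sph_norm p.2) (sph_norm p.1) h.2 h.1 (by linarith) (by linarith)
  · intro p hp
    rcases hp with h | h
    · rw [if_pos (mem_upperHemi_iff.mp h.1)]
      exact Gv_zero n _ _
    · rw [if_neg (not_lt.2 (le_of_lt (mem_lowerHemi_iff.mp h.1)))]
      rw [show (1:ℝ) - 0 = 1 by norm_num]
      exact Gv_one n _ _
  · intro p hp
    rcases hp with h | h
    · rw [if_pos (mem_upperHemi_iff.mp h.1)]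
      exact Gv_one n _ _
    · rw [if_neg (not_lt.2 (le_of_lt (mem_lowerHemi_iff.mp h.1)))]
      rw [show (1:ℝ) - 1 = 0 by norm_num]
      exact Gv_zero n _ _
  · intro p hp t _ _
    simp only [Prod.fst_swap, Prod.snd_swap]
    rcases hp with h | h
    · rw [if_neg (not_lt.2 (le_of_lt (mem_lowerHemi_iff.mp h.2))), if_pos (mem_upperHemi_iff.mp h.1)]
    · rw [if_pos (mem_upperHemi_iff.mp h.2), if_neg (not_lt.2 (le_of_lt (mem_lowerHemi_iff.mp h.1))), sub_sub_cancel]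
  · exact hswV

/-! ### From the three sections to bidirectional planners -/

lemma evalPt_two_zero : evalPt 2 0 = 0 := by
  apply Subtype.ext
  norm_num [evalPt]

lemma evalPt_two_one : evalPt 2 1 = 1 := by
  apply Subtype.ext
  norm_num [evalPt]

lemma hasBidirPlanners_of_sections (n : ℕ) (W : Fin 3 → Set (Sph n × Sph n))
    (hop : ∀ i, IsOpen (W i)) (hcov : W 0 ∪ W 1 ∪ W 2 = Set.univ)
    (hs : ∀ i, HasSwapEquivariantSection n (W i)) :
    HasBidirPlanners (Sph n) 2 3 := by
  have hev : Continuous fun x : Fin 2 → Sph n => (x 0, x 1) :=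
    (continuous_apply 0).prodMk (continuous_apply 1)
  have hrev0 : Fin.rev (0 : Fin 2) = 1 := by decide
  have hrev1 : Fin.rev (1 : Fin 2) = 0 := by decide
  have hrt : ∀ x : Fin 2 → Sph n, (rtuple x 0, rtuple x 1) = Prod.swap (x 0, x 1) := by
    intro x
    simp [rtuple, Prod.swap, hrev0, hrev1]
  refine ⟨fun i => (fun x : Fin 2 → Sph n => (x 0, x 1)) ⁻¹' W i, fun i => (hop i).preimage hev,
    ?_, ?_, ?_⟩
  · rw [Set.eq_univ_iff_forall]
    intro x
    have : (x 0, x 1) ∈ W 0 ∪ W 1 ∪ W 2 := by rw [hcov]; trivial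
    rcases this with (h | h) | h
    · exact Set.mem_iUnion.2 ⟨0, h⟩
    · exact Set.mem_iUnion.2 ⟨1, h⟩
    · exact Set.mem_iUnion.2 ⟨2, h⟩
  · intro i x hx
    show (rtuple x 0, rtuple x 1) ∈ W i
    rw [hrt x]
    exact (hs i).1 _ hx
  · intro i
    obtain ⟨hswap, s, hends, hequiv⟩ := hs i
    set Wi := (fun x : Fin 2 → Sph n => (x 0, x 1)) ⁻¹' W i with hWi
    set emap : C(↥Wi, ↥(W i)) :=
      ⟨fun x => ⟨((x : Fin 2 → Sph n) 0, (x : Fin 2 → Sph n) 1), x.2⟩,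
        (hev.comp continuous_subtype_val).subtype_mk _⟩ with hemap
    refine ⟨s.comp emap, ?_, ?_⟩
    · intro x j
      fin_cases j
      · show (s.comp emap) x (evalPt 2 0) = (x : Fin 2 → Sph n) 0
        rw [evalPt_two_zero]
        exact (hends (emap x)).1
      · show (s.comp emap) x (evalPt 2 1) = (x : Fin 2 → Sph n) 1
        rw [evalPt_two_one]
        exact (hends (emap x)).2
    · intro x hx
      show s (emap ⟨rtuple (x : Fin 2 → Sph n), hx⟩) = rpath (s (emap x))
      have hkey : emap ⟨rtuple (x : Fin 2 → Sph n), hx⟩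
          = ⟨Prod.swap ((emap x : Sph n × Sph n)), hswap _ (emap x).2⟩ := by
        apply Subtype.ext
        exact hrt (x : Fin 2 → Sph n)
      rw [hkey]
      exact hequiv (emap x) _

end MainAux


/-- For every `n ≥ 1`, `TC^β_2(S^n) ≤ 3`, realized by the explicit
cover of `S^n × S^n` by the three open swap-invariant sets
`U_+ = (S^n∖{N}) × (S^n∖{N})`, `U_- = (S^n∖{S}) × (S^n∖{S})` and
`V = (D_+ × D_-) ∪ (D_- × D_+)`, each admitting a continuous swap-equivariant
section of the evaluation map `e_2`. -/
theorem sphere_TCbeta_two_le_three (n : ℕ) (hn : 1 ≤ n) :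
    TCbeta (Sph n) 2 ≤ 3 ∧
    IsOpen (Uplus n) ∧ IsOpen (Uminus n) ∧ IsOpen (Vset n) ∧
    Uplus n ∪ Uminus n ∪ Vset n = Set.univ ∧
    HasSwapEquivariantSection n (Uplus n) ∧
    HasSwapEquivariantSection n (Uminus n) ∧
    HasSwapEquivariantSection n (Vset n) := by
  have hplan : HasBidirPlanners (Sph n) 2 3 := by
    apply hasBidirPlanners_of_sections n ![Uplus n, Uminus n, Vset n]
    · intro i
      fin_cases i
      · exact isOpen_Uplus n
      · exact isOpen_Uminus n
      · exact isOpen_Vset n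
    · simpa using cover_eq n
    · intro i
      fin_cases i
      · exact hasSES_Uplus n
      · exact hasSES_Uminus n
      · exact hasSES_Vset n hn
  refine ⟨?_, isOpen_Uplus n, isOpen_Uminus n, isOpen_Vset n, cover_eq n,
    hasSES_Uplus n, hasSES_Uminus n, hasSES_Vset n hn⟩
  exact sInf_le ⟨3, by norm_cast, hplan⟩
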